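/- Let a_i, b_i, c_i (i = 1,2,3) be real numbers. Define X(u) = a₁ + b₁u + c₁u², Y(v) = a₂ + b₂v + c₂v², Z(w) = a₃ + b₃w + c₃w². Then (Y(v) − Z(w))X'(u) + (X(u) − Z(w))Y'(v) − (X(u) + Y(v))Z'(w) = 0 holds for all (u,v,w) with u+v+w = 0 if and only if the following six equations hold: a₁(b₂−b₃) + a₂(b₁−b₃) − a₃(b₁+b₂) = 0; b₁b₂ + b₂b₃ + 2c₁(a₂−a₃) + 2c₃(a₁+a₂) = 0; b₁b₂ + b₁b₃ + 2c₂(a₁−a₃) + 2c₃(a₁+a₂) = 0; c₁(b₂+b₃) + c₃(b₁−b₂) = 0; c₂(b₁+b₃) − c₃(b₁−b₂) = 0; c₁c₂ − c₁c₃ − c₂c₃ = 0. -/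

import Mathlib

/-- The quadratic ansatz `a + b·u + c·u²` (case `K = 0`). -/
noncomputable def quadAnsatz (a b c : ℝ) : ℝ → ℝ :=
  fun u => a + b * u + c * u ^ 2

lemma deriv_quadAnsatz (a b c u : ℝ) : deriv (quadAnsatz a b c) u = b + 2 * c * u := by
  have h : HasDerivAt (quadAnsatz a b c) (b + 2 * c * u) u := by
    have h1 : HasDerivAt (fun x : ℝ => a + b * x + c * x ^ 2)
        (0 + b * 1 + c * (2 * u ^ 1)) u := by
      exact ((hasDerivAt_const u a).add ((hasDerivAt_id u).const_mul b)).add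
        ((hasDerivAt_pow 2 u).const_mul c)
    exact h1.congr_deriv (by ring)
  exact h.deriv

/-- For the quadratic ansatz, the separable zero mean curvature equation
`(Y−Z)X' + (X−Z)Y' − (X+Y)Z' = 0` on the plane `u+v+w=0` holds iff the six constraint
equations (15) relating the constants `aᵢ, bᵢ, cᵢ` hold. -/
theorem stmt_7 (a₁ b₁ c₁ a₂ b₂ c₂ a₃ b₃ c₃ : ℝ) :
    (∀ u v w : ℝ, u + v + w = 0 →
      (quadAnsatz a₂ b₂ c₂ v - quadAnsatz a₃ b₃ c₃ w) * deriv (quadAnsatz a₁ b₁ c₁) u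
        + (quadAnsatz a₁ b₁ c₁ u - quadAnsatz a₃ b₃ c₃ w) * deriv (quadAnsatz a₂ b₂ c₂) v
        - (quadAnsatz a₁ b₁ c₁ u + quadAnsatz a₂ b₂ c₂ v) * deriv (quadAnsatz a₃ b₃ c₃) w
        = 0)
    ↔ (a₁ * (b₂ - b₃) + a₂ * (b₁ - b₃) - a₃ * (b₁ + b₂) = 0 ∧
       b₁ * b₂ + b₂ * b₃ + 2 * c₁ * (a₂ - a₃) + 2 * c₃ * (a₁ + a₂) = 0 ∧
       b₁ * b₂ + b₁ * b₃ + 2 * c₂ * (a₁ - a₃) + 2 * c₃ * (a₁ + a₂) = 0 ∧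
       c₁ * (b₂ + b₃) + c₃ * (b₁ - b₂) = 0 ∧
       c₂ * (b₁ + b₃) - c₃ * (b₁ - b₂) = 0 ∧
       c₁ * c₂ - c₁ * c₃ - c₂ * c₃ = 0) := by
  constructor
  · intro h
    have H : ∀ u v : ℝ,
        (a₂ + b₂ * v + c₂ * v ^ 2 - (a₃ + b₃ * (-u - v) + c₃ * (-u - v) ^ 2)) * (b₁ + 2 * c₁ * u)
        + (a₁ + b₁ * u + c₁ * u ^ 2 - (a₃ + b₃ * (-u - v) + c₃ * (-u - v) ^ 2)) * (b₂ + 2 * c₂ * v)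
        - (a₁ + b₁ * u + c₁ * u ^ 2 + (a₂ + b₂ * v + c₂ * v ^ 2)) * (b₃ + 2 * c₃ * (-u - v))
        = 0 := by
      intro u v
      have := h u v (-u - v) (by ring)
      simpa [deriv_quadAnsatz, quadAnsatz] using this
    have h00 := H 0 0
    have h10 := H 1 0
    have hm10 := H (-1) 0
    have h01 := H 0 1
    have h0m1 := H 0 (-1)
    have h11 := H 1 1
    refine ⟨by linear_combination h00,
      by linear_combination (h10 - hm10) / 2,
      by linear_combination (h01 - h0m1) / 2,
      by linear_combination (h10 + hm10) / 2 - h00,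
      by linear_combination (h01 + h0m1) / 2 - h00,
      by linear_combination h11 / 4 + 5 / 4 * h00 - h10 / 2 - hm10 / 4 - h01 / 2 - h0m1 / 4⟩
  · rintro ⟨h1, h2, h3, h4, h5, h6⟩ u v w hw
    have hwv : w = -u - v := by linarith
    subst hwv
    simp only [quadAnsatz, deriv_quadAnsatz]
    linear_combination h1 + u * h2 + v * h3 + (u ^ 2 + 2 * u * v) * h4
      + (2 * u * v + v ^ 2) * h5 + (2 * u ^ 2 * v + 2 * u * v ^ 2) * h6
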